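/- Let Ω ⊆ ℝ be bounded measurable of measure 1, spectral with spectrum Λ = {λ_0 = 0, λ_1, ..., λ_{p-1}} + pℤ, λ_i ∈ [0,p). For x ∈ ℝ set Ω_x = {j ∈ ℤ : x + j/p ∈ Ω}. Then for a.e. x ∈ ℝ, |Ω_x| = p, and for all i, i' ∈ {0,...,p-1}: (1/p) ∑_{j ∈ Ω_x} e^{2πi(λ_{i'} − λ_i) j/p} = δ_{i,i'} for a.e. x ∈ Ω. Equivalently, for a.e. x, the finite set (1/p)Ω_x is a spectrum for the finite set {λ_0, ..., λ_{p-1}}. -/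

import Mathlib

open MeasureTheory Complex Set Bornology

/-- The exponential function `e_λ(x) = e^{2πiλx}`. -/
noncomputable def expf (l : ℝ) : ℝ → ℂ := fun x =>
  Complex.exp (2 * Real.pi * Complex.I * (l : ℂ) * (x : ℂ))

/-- `Λ` is a spectrum for `Ω`: the exponentials `e_λ`, `λ ∈ Λ`, form an
orthogonal basis of `L²(Ω)` (mutually orthogonal and complete). -/
def IsSpectrum (Ω Λ : Set ℝ) : Prop :=
  (∀ l ∈ Λ, ∀ m ∈ Λ, l ≠ m →
    (∫ x in Ω, expf l x * (starRingEnd ℂ) (expf m x)) = 0) ∧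
  (∀ f : ℝ → ℂ, MemLp f 2 (volume.restrict Ω) →
    (∀ l ∈ Λ, (∫ x in Ω, f x * (starRingEnd ℂ) (expf l x)) = 0) →
    f =ᵐ[volume.restrict Ω] 0)

open AddCircle intervalIntegral

lemma fourierCoeff_congr_ae' {T : ℝ} [hT : Fact (0 < T)] {f g : AddCircle T → ℂ}
    (h : f =ᵐ[haarAddCircle] g) (n : ℤ) : fourierCoeff f n = fourierCoeff g n := by
  unfold fourierCoeff
  exact integral_congr_ae (h.mono fun x hx => by simp only [hx])

lemma exists_rep {T : ℝ} (hT : 0 < T) (x : ℝ) :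
    ∃ (k : ℤ) (y : ℝ), y ∈ Ioc (0:ℝ) (0+T) ∧ x = y + k * T := by
  refine ⟨⌈x / T⌉ - 1, x - (⌈x / T⌉ - 1 : ℤ) * T, ?_, by push_cast; ring⟩
  have h1 : ((⌈x / T⌉ : ℝ) - 1) < x / T := by linarith [Int.ceil_lt_add_one (x / T)]
  have h2 : x / T ≤ (⌈x / T⌉ : ℝ) := Int.le_ceil _
  constructor
  · have := (lt_div_iff₀ hT).mp h1
    push_cast
    linarith
  · have := (div_le_iff₀ hT).mp h2
    push_cast
    nlinarith

set_option maxHeartbeats 1000000 in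
lemma ae_zero_of_fourierCoeffOn_eq_zero {T : ℝ} (hT : 0 < T) {G : ℝ → ℂ}
    (hper : Function.Periodic G T) (hmeas : Measurable G) {C : ℝ}
    (hbd : ∀ x, ‖G x‖ ≤ C)
    (hcoeff : ∀ n : ℤ, fourierCoeffOn (by linarith : (0:ℝ) < T) G n = 0) :
    G =ᵐ[volume] 0 := by
  haveI : Fact (0 < T) := ⟨hT⟩
  set g : AddCircle T → ℂ := liftIoc T 0 G with hgdef
  have hg_meas : Measurable g := by
    have : g = (fun y : Ioc (0:ℝ) (0+T) => G y) ∘ (measurableEquivIoc T 0) := rfl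
    rw [this]
    exact (hmeas.comp measurable_subtype_coe).comp (measurableEquivIoc T 0).measurable
  have hg_bd : ∀ z, ‖g z‖ ≤ C := fun z => hbd _
  have hmem : MemLp g 2 haarAddCircle :=
    MemLp.of_bound hg_meas.aestronglyMeasurable C (Filter.Eventually.of_forall hg_bd)
  have hcg : ∀ n : ℤ, fourierCoeff g n = 0 := by
    intro n
    rw [hgdef, fourierCoeff_liftIoc_eq]
    have h2 : fourierCoeffOn (lt_add_of_pos_right 0 hT) G n
        = fourierCoeffOn (by linarith : (0:ℝ) < T) G n := by
      rw [fourierCoeffOn_eq_integral, fourierCoeffOn_eq_integral]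
      simp [zero_add]
    rw [h2]; exact hcoeff n
  have hae : g =ᵐ[haarAddCircle] 0 := by
    have h0 : hmem.toLp g = 0 := by
      apply (fourierBasis (T := T)).repr.injective
      ext n
      rw [fourierBasis_repr]
      rw [fourierCoeff_congr_ae' (MemLp.coeFn_toLp hmem)]
      simp [hcg n]
    have := (MemLp.coeFn_toLp hmem).symm
    rw [h0] at this
    exact this.trans (Lp.coeFn_zero _ _ _)
  have haev : g =ᵐ[(volume : Measure (AddCircle T))] 0 := by
    rw [Filter.EventuallyEq, ae_iff] at hae ⊢
    rw [AddCircle.volume_eq_smul_haarAddCircle, Measure.smul_apply, hae, smul_zero]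
  have hIoc : ∀ a : ℝ, G =ᵐ[volume.restrict (Ioc a (a+T))] 0 := by
    intro a
    have hqmp := (AddCircle.measurePreserving_mk T a).quasiMeasurePreserving
    have hcomp : g ∘ ((↑) : ℝ → AddCircle T) =ᵐ[volume.restrict (Ioc a (a+T))] 0 :=
      haev.comp_tendsto hqmp.tendsto_ae
    refine (Filter.EventuallyEq.trans ?_ hcomp)
    refine Filter.Eventually.of_forall fun x => ?_
    obtain ⟨k, y, hy, rfl⟩ := exists_rep hT x
    have h1 : ((y + k * T : ℝ) : AddCircle T) = (y : ℝ) := by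
      rw [AddCircle.coe_add, ← zsmul_eq_mul, AddCircle.coe_zsmul, AddCircle.coe_period,
        smul_zero, add_zero]
    have h2 : G (y + k * T) = G y := by
      have := hper.sub_int_mul_eq (x := y + k * T) k
      simpa using this.symm
    rw [Function.comp_apply, h1, hgdef, liftIoc_coe_apply hy, h2]
  -- combine over all periods
  have hbadcover : {x : ℝ | ¬ G x = 0} ⊆
      ⋃ k : ℤ, ({x : ℝ | ¬ G x = 0} ∩ Ioc ((k:ℝ) * T) ((k:ℝ) * T + T)) := by
    intro x hx
    obtain ⟨k, y, hy, rfl⟩ := exists_rep hT x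
    refine mem_iUnion.2 ⟨k, hx, ?_, ?_⟩
    · have := hy.1; linarith [hy.1]
    · have := hy.2; rw [zero_add] at this; linarith
  have hnull : volume {x : ℝ | ¬ G x = 0} = 0 := by
    refine measure_mono_null hbadcover (measure_iUnion_null fun k => ?_)
    have := ae_iff.mp (hIoc ((k:ℝ) * T))
    rw [Measure.restrict_apply' measurableSet_Ioc] at this
    simpa using this
  rw [Filter.EventuallyEq, ae_iff]
  simpa using hnull

noncomputable def eexp (m : ℝ) : ℝ → ℂ := fun y =>
  Complex.exp (2 * Real.pi * Complex.I * (m : ℂ) * (y : ℂ))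

noncomputable def pterm (Ω : Set ℝ) (m : ℝ) (p : ℕ) (j : ℤ) : ℝ → ℂ := fun x =>
  Set.indicator Ω (eexp m) (x + (j : ℝ) / p)

noncomputable def pG (Ω : Set ℝ) (m : ℝ) (p : ℕ) : ℝ → ℂ := fun x =>
  ∑' j : ℤ, pterm Ω m p j x

lemma eexp_norm (m y : ℝ) : ‖eexp m y‖ = 1 := by
  unfold eexp
  rw [Complex.norm_exp]
  norm_num [Complex.mul_re, Complex.mul_im]

lemma eexp_measurable (m : ℝ) : Measurable (eexp m) := by
  unfold eexp; fun_prop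

lemma pterm_measurable {Ω : Set ℝ} (hΩ : MeasurableSet Ω) (m : ℝ) (p : ℕ) (j : ℤ) :
    Measurable (pterm Ω m p j) :=
  ((eexp_measurable m).indicator hΩ).comp (measurable_id.add_const _)

lemma pterm_norm_le (Ω : Set ℝ) (m : ℝ) (p : ℕ) (j : ℤ) (x : ℝ) :
    ‖pterm Ω m p j x‖ ≤ 1 := by
  unfold pterm
  refine le_trans (norm_indicator_le_norm_self _ _) ?_
  rw [eexp_norm]

lemma fiber_subset_Icc {Ω : Set ℝ} {R : ℝ} (hsub : Ω ⊆ Icc (-R) R) {p : ℕ} (hp : 0 < p)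
    (x : ℝ) :
    {j : ℤ | x + (j : ℝ) / p ∈ Ω} ⊆ Set.Icc ⌈(-R - x) * p⌉ ⌊(R - x) * p⌋ := by
  intro j hj
  have hp' : (0:ℝ) < p := by exact_mod_cast hp
  obtain ⟨h1, h2⟩ := hsub hj
  constructor
  · rw [Int.ceil_le]
    have : -R - x ≤ (j:ℝ)/p := by linarith
    calc (-R - x) * p ≤ ((j:ℝ)/p) * p := by nlinarith
    _ = j := by field_simp
  · rw [Int.le_floor]
    have : (j:ℝ)/p ≤ R - x := by linarith
    calc (j:ℝ) = ((j:ℝ)/p) * p := by field_simp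
    _ ≤ (R - x) * p := by nlinarith

lemma fiber_finite {Ω : Set ℝ} {R : ℝ} (hsub : Ω ⊆ Icc (-R) R) {p : ℕ} (hp : 0 < p)
    (x : ℝ) : {j : ℤ | x + (j : ℝ) / p ∈ Ω}.Finite :=
  (Set.finite_Icc _ _).subset (fiber_subset_Icc hsub hp x)

lemma fiber_card_le {Ω : Set ℝ} {R : ℝ} (hsub : Ω ⊆ Icc (-R) R) (hR : 0 ≤ R)
    {p : ℕ} (hp : 0 < p) (x : ℝ) :
    (((fiber_finite hsub hp x).toFinset.card : ℝ)) ≤ 2 * R * p + 1 := by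
  have hp' : (0:ℝ) < p := by exact_mod_cast hp
  set a := ⌈(-R - x) * p⌉ with ha_def
  set b := ⌊(R - x) * p⌋ with hb_def
  have hsubF : (fiber_finite hsub hp x).toFinset ⊆ Finset.Icc a b := by
    intro j hj
    rw [Set.Finite.mem_toFinset] at hj
    have := fiber_subset_Icc hsub hp x hj
    simpa [Finset.mem_Icc, ha_def, hb_def] using this
  have hcard : (fiber_finite hsub hp x).toFinset.card ≤ (Finset.Icc a b).card :=
    Finset.card_le_card hsubF
  have hIcc : (Finset.Icc a b).card = (b + 1 - a).toNat := Int.card_Icc a b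
  have hb : (b : ℝ) ≤ (R - x) * p := Int.floor_le _
  have ha : (-R - x) * p ≤ (a : ℝ) := Int.le_ceil _
  have h2 : (((b + 1 - a).toNat : ℝ)) ≤ 2 * R * p + 1 := by
    by_cases hba : 0 ≤ b + 1 - a
    · have : (((b + 1 - a).toNat : ℤ) : ℝ) = ((b + 1 - a : ℤ) : ℝ) := by
        rw [Int.toNat_of_nonneg hba]
      rw [show (((b + 1 - a).toNat : ℝ)) = (((b + 1 - a).toNat : ℤ) : ℝ) by push_cast; ring, this]
      push_cast
      linarith
    · rw [Int.toNat_of_nonpos (by omega)]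
      push_cast
      nlinarith [mul_nonneg (mul_nonneg (by norm_num : (0:ℝ) ≤ 2) hR) hp'.le]
  calc ((fiber_finite hsub hp x).toFinset.card : ℝ) ≤ ((Finset.Icc a b).card : ℝ) := by
        exact_mod_cast hcard
  _ = (((b + 1 - a).toNat : ℝ)) := by rw [hIcc]
  _ ≤ _ := h2

lemma pterm_eq_zero_of_not_mem {Ω : Set ℝ} {m : ℝ} {p : ℕ} {j : ℤ} {x : ℝ}
    (h : j ∉ {j : ℤ | x + (j : ℝ) / p ∈ Ω}) : pterm Ω m p j x = 0 := by
  have h' : x + (j:ℝ)/p ∉ Ω := h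
  unfold pterm
  exact Set.indicator_of_notMem h' (eexp m)

lemma pG_eq_sum {Ω : Set ℝ} {R : ℝ} (hsub : Ω ⊆ Icc (-R) R) {p : ℕ} (hp : 0 < p)
    (m : ℝ) (x : ℝ) :
    pG Ω m p x = ∑ j ∈ (fiber_finite hsub hp x).toFinset, eexp m (x + (j : ℝ) / p) := by
  unfold pG
  rw [tsum_eq_sum (s := (fiber_finite hsub hp x).toFinset) (fun j hj =>
    pterm_eq_zero_of_not_mem (by simpa [Set.Finite.mem_toFinset] using hj))]
  refine Finset.sum_congr rfl fun j hj => ?_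
  rw [Set.Finite.mem_toFinset] at hj
  have hj' : x + (j:ℝ)/p ∈ Ω := hj
  show Set.indicator Ω (eexp m) (x + (j:ℝ)/p) = eexp m (x + (j:ℝ)/p)
  exact Set.indicator_of_mem hj' (eexp m)

lemma pG_norm_le {Ω : Set ℝ} {R : ℝ} (hsub : Ω ⊆ Icc (-R) R) (hR : 0 ≤ R)
    {p : ℕ} (hp : 0 < p) (m : ℝ) (x : ℝ) : ‖pG Ω m p x‖ ≤ 2 * R * p + 1 := by
  rw [pG_eq_sum hsub hp]
  refine le_trans (norm_sum_le _ _) ?_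
  refine le_trans (Finset.sum_le_card_nsmul _ _ 1 fun j _ => (eexp_norm m _).le) ?_
  simpa using fiber_card_le hsub hR hp x

lemma pG_summable {Ω : Set ℝ} {R : ℝ} (hsub : Ω ⊆ Icc (-R) R) {p : ℕ} (hp : 0 < p)
    (m : ℝ) (x : ℝ) : Summable (fun j : ℤ => pterm Ω m p j x) :=
  summable_of_ne_finset_zero (s := (fiber_finite hsub hp x).toFinset) (fun j hj =>
    pterm_eq_zero_of_not_mem (by simpa [Set.Finite.mem_toFinset] using hj))

lemma pG_periodic (Ω : Set ℝ) (m : ℝ) {p : ℕ} (hp : 0 < p) :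
    Function.Periodic (pG Ω m p) ((p:ℝ)⁻¹) := by
  intro x
  have hp' : (0:ℝ) < p := by exact_mod_cast hp
  unfold pG
  rw [← (Equiv.addRight (1:ℤ)).tsum_eq (fun j => pterm Ω m p j x)]
  congr 1
  ext j
  show pterm Ω m p j (x + (p:ℝ)⁻¹) = pterm Ω m p (j + 1) x
  unfold pterm
  congr 1
  push_cast
  field_simp
  ring

lemma pG_measurable {Ω : Set ℝ} {R : ℝ} (hΩ : MeasurableSet Ω) (hsub : Ω ⊆ Icc (-R) R)
    {p : ℕ} (hp : 0 < p) (m : ℝ) : Measurable (pG Ω m p) := by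
  have hmono : Monotone (fun n : ℕ => Finset.Icc (-(n:ℤ)) (n:ℤ)) := fun a b hab =>
    Finset.Icc_subset_Icc (by exact_mod_cast neg_le_neg (Int.ofNat_le.2 hab))
      (by exact_mod_cast hab)
  have hsurj : ∀ j : ℤ, ∃ n : ℕ, j ∈ Finset.Icc (-(n:ℤ)) (n:ℤ) := fun j =>
    ⟨j.natAbs, by simp only [Finset.mem_Icc]; omega⟩
  have htend : Filter.Tendsto (fun n : ℕ => Finset.Icc (-(n:ℤ)) (n:ℤ)) Filter.atTop
      Filter.atTop := hmono.tendsto_atTop_finset fun j => hsurj j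
  apply measurable_of_tendsto_metrizable
    (f := fun n : ℕ => fun x => ∑ j ∈ Finset.Icc (-(n:ℤ)) (n:ℤ), pterm Ω m p j x)
  · intro n
    exact Finset.measurable_sum _ fun j _ => pterm_measurable hΩ m p j
  · rw [tendsto_pi_nhds]
    intro x
    exact ((pG_summable hsub hp m x).hasSum).comp htend

lemma eexp_continuous (m : ℝ) : Continuous (eexp m) := by
  unfold eexp; fun_prop

lemma fourier_apply_norm {T : ℝ} [Fact (0 < T)] (n : ℤ) (z : AddCircle T) :
    ‖fourier n z‖ = 1 := by
  rw [fourier_apply]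
  exact Circle.norm_coe _

lemma exp_eq_exp_of_sub_int (a b : ℂ) (k : ℤ) (h : a = b + k * (2 * Real.pi * Complex.I)) :
    Complex.exp a = Complex.exp b := by
  rw [h, Complex.exp_add, Complex.exp_int_mul_two_pi_mul_I, mul_one]

set_option maxHeartbeats 2000000 in
lemma pG_fourierCoeffOn {Ω : Set ℝ} (hΩ : MeasurableSet Ω) {R : ℝ}
    (hsub : Ω ⊆ Icc (-R) R) (hR : 0 ≤ R) {p : ℕ} (hp : 0 < p) (m : ℝ) (n : ℤ)
    (hT : (0:ℝ) < (p:ℝ)⁻¹) :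
    fourierCoeffOn hT (pG Ω m p) n = ((p : ℝ)) • ∫ y in Ω, eexp (m - n * p) y := by
  have hp' : (0:ℝ) < p := by exact_mod_cast hp
  set T : ℝ := (p:ℝ)⁻¹ with hTdef
  haveI : Fact (0 < T) := ⟨hT⟩
  haveI : Fact (0 < T - 0) := ⟨by rw [sub_zero]; exact hT⟩
  set F : ℝ → ℂ := Set.indicator Ω (eexp (m - n * p)) with hFdef
  set J : Finset ℤ := Finset.Icc (-⌊R * p⌋ - 1) ⌊R * p⌋ with hJdef
  -- pointwise identity
  have claim2 : ∀ (j : ℤ) (x : ℝ),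
      (fourier (-n) (x : AddCircle (T - 0))) * pterm Ω m p j x = F (x + (j:ℝ)/p) := by
    intro j x
    by_cases h : x + (j:ℝ)/p ∈ Ω
    · have h1 : pterm Ω m p j x = eexp m (x + (j:ℝ)/p) := Set.indicator_of_mem h _
      have h2 : F (x + (j:ℝ)/p) = eexp (m - n * p) (x + (j:ℝ)/p) := Set.indicator_of_mem h _
      rw [h1, h2, fourier_coe_apply]
      unfold eexp
      rw [← Complex.exp_add]
      refine exp_eq_exp_of_sub_int _ _ (n * j) ?_
      have hpc : (p : ℂ) ≠ 0 := by exact_mod_cast hp'.ne'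
      push_cast [hTdef, sub_zero]
      field_simp
      ring
    · have h1 : pterm Ω m p j x = 0 := Set.indicator_of_notMem h _
      have h2 : F (x + (j:ℝ)/p) = 0 := Set.indicator_of_notMem h _
      rw [h1, h2, mul_zero]
  -- truncation on the fundamental domain
  have claim1 : ∀ x ∈ Ioc (0:ℝ) T, ∀ j ∉ J, pterm Ω m p j x = 0 := by
    intro x hx j hj
    by_contra hne
    have hmem : x + (j:ℝ)/p ∈ Ω := by
      by_contra hmem
      exact hne (Set.indicator_of_notMem hmem _)
    obtain ⟨hl, hr⟩ := hsub hmem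
    apply hj
    rw [hJdef, Finset.mem_Icc]
    have hx0 : 0 < x := hx.1
    have hxT : x ≤ T := hx.2
    have hxp : x * p ≤ 1 := by
      calc x * p ≤ T * p := by nlinarith
      _ = 1 := by rw [hTdef, inv_mul_cancel₀ hp'.ne']
    constructor
    · have : (-j - 1 : ℤ) ≤ ⌊R * p⌋ := by
        rw [Int.le_floor]
        have h1 : -R - x ≤ (j:ℝ)/p := by linarith
        have h2 : (-R - x) * p ≤ (j:ℝ) := by
          calc (-R - x) * p ≤ ((j:ℝ)/p) * p := by nlinarith
          _ = j := by field_simp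
        push_cast
        nlinarith
      omega
    · rw [Int.le_floor]
      have h1 : (j:ℝ)/p ≤ R - x := by linarith
      have h2 : (j:ℝ) ≤ (R - x) * p := by
        calc (j:ℝ) = ((j:ℝ)/p) * p := by field_simp
        _ ≤ (R - x) * p := by nlinarith
      nlinarith
  have hsum : ∀ x ∈ Ioc (0:ℝ) T, pG Ω m p x = ∑ j ∈ J, pterm Ω m p j x := by
    intro x hx
    exact tsum_eq_sum (fun j hj => claim1 x hx j hj)
  -- integrability of each piece
  have hintg : ∀ j : ℤ, IntegrableOn
      (fun x : ℝ => (fourier (-n) (x : AddCircle (T - 0))) * pterm Ω m p j x) (Ioc (0:ℝ) T) := by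
    intro j
    have hmeas : Measurable fun x : ℝ => (fourier (-n) (x : AddCircle (T - 0))) * pterm Ω m p j x := by
      apply Measurable.mul
      · exact ((map_continuous (fourier (-n))).comp continuous_quotient_mk').measurable
      · exact pterm_measurable hΩ m p j
    refine memLp_one_iff_integrable.mp ?_
    refine MemLp.of_bound hmeas.aestronglyMeasurable 1 (Filter.Eventually.of_forall fun x => ?_)
    rw [norm_mul]
    calc ‖fourier (-n) (x : AddCircle (T - 0))‖ * ‖pterm Ω m p j x‖
        ≤ 1 * 1 := mul_le_mul (le_of_eq (fourier_apply_norm _ _)) (pterm_norm_le _ _ _ _ _)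
            (norm_nonneg _) zero_le_one
    _ = 1 := one_mul 1
  -- F is integrable
  have hFint : Integrable F := by
    rw [hFdef, integrable_indicator_iff hΩ]
    exact ((eexp_continuous (m - n * p)).integrableOn_Icc).mono_set hsub
  -- main computation of the inner integral
  have hmain : (∫ x in (0:ℝ)..T, (fourier (-n) (x : AddCircle (T - 0))) • pG Ω m p x)
      = ∫ y in Ω, eexp (m - n * p) y := by
    rw [intervalIntegral.integral_of_le hT.le]
    have e1 : ∫ x in Ioc (0:ℝ) T, (fourier (-n) (x : AddCircle (T - 0))) • pG Ω m p x
        = ∫ x in Ioc (0:ℝ) T, ∑ j ∈ J, (fourier (-n) (x : AddCircle (T - 0))) * pterm Ω m p j x := by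
      refine setIntegral_congr_fun measurableSet_Ioc fun x hx => ?_
      rw [smul_eq_mul, hsum x hx, Finset.mul_sum]
    rw [e1, integral_finset_sum J (fun j _ => hintg j)]
    have e2 : ∀ j : ℤ, (∫ x in Ioc (0:ℝ) T, (fourier (-n) (x : AddCircle (T - 0))) * pterm Ω m p j x)
        = ∫ y in Ioc ((j:ℝ)/p) ((j:ℝ)/p + T), F y := by
      intro j
      rw [← intervalIntegral.integral_of_le hT.le,
        ← intervalIntegral.integral_of_le (by linarith : (j:ℝ)/p ≤ (j:ℝ)/p + T)]
      rw [show (fun x : ℝ => (fourier (-n) (x : AddCircle (T - 0))) * pterm Ω m p j x)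
          = (fun x : ℝ => F (x + (j:ℝ)/p)) from funext (claim2 j)]
      rw [intervalIntegral.integral_comp_add_right (a := 0) (b := T) F ((j:ℝ)/p)]
      rw [zero_add, add_comm T ((j:ℝ)/p)]
    simp_rw [e2]
    -- disjointness
    have hdkey : ∀ j k : ℤ, j < k →
        Disjoint (Ioc ((j:ℝ)/p) ((j:ℝ)/p + T)) (Ioc ((k:ℝ)/p) ((k:ℝ)/p + T)) := by
      intro j k hjk
      rw [Set.Ioc_disjoint_Ioc]
      have h1 : (j:ℝ)/p + T ≤ (k:ℝ)/p := by
        rw [hTdef, inv_eq_one_div, ← add_div]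
        refine (div_le_div_iff_of_pos_right hp').mpr ?_
        exact_mod_cast hjk
      exact le_trans (min_le_left _ _) (h1.trans (le_max_right _ _))
    have hdisj : Set.Pairwise ↑J
        (Function.onFun Disjoint fun j : ℤ => Ioc ((j:ℝ)/p) ((j:ℝ)/p + T)) := by
      intro j _ k _ hjk
      rcases hjk.lt_or_gt with h | h
      · exact hdkey j k h
      · exact (hdkey k j h).symm
    rw [← integral_biUnion_finset J (fun j _ => measurableSet_Ioc) hdisj
      (fun j _ => hFint.integrableOn)]
    -- the union covers Ω
    have hcov : Ω ⊆ ⋃ j ∈ J, Ioc ((j:ℝ)/p) ((j:ℝ)/p + T) := by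
      intro y hy
      obtain ⟨h1, h2⟩ := hsub hy
      set j : ℤ := ⌈y * p⌉ - 1 with hj_def
      have hy1 : (j:ℝ) < y * p := by
        rw [hj_def]; push_cast
        linarith [Int.ceil_lt_add_one (y * p)]
      have hy2 : y * p ≤ (j:ℝ) + 1 := by
        rw [hj_def]; push_cast
        linarith [Int.le_ceil (y * p)]
      have hjJ : j ∈ J := by
        rw [hJdef, Finset.mem_Icc]
        constructor
        · have : (-j - 1 : ℤ) ≤ ⌊R * p⌋ := by
            rw [Int.le_floor]
            push_cast
            nlinarith
          omega
        · rw [Int.le_floor]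
          nlinarith
      refine Set.mem_biUnion hjJ ?_
      constructor
      · rw [div_lt_iff₀ hp']
        exact hy1
      · rw [hTdef, inv_eq_one_div, ← add_div, le_div_iff₀ hp']
        linarith
    rw [hFdef, setIntegral_indicator hΩ, Set.inter_eq_self_of_subset_right hcov]
  -- assemble
  rw [fourierCoeffOn_eq_integral]
  rw [hmain, show (1/(T - 0) : ℝ) = (p:ℝ) by rw [sub_zero, hTdef]; simp]
lemma fourierCoeffOn_const {T : ℝ} (hT : (0:ℝ) < T) (c : ℂ) (n : ℤ) :
    fourierCoeffOn (show (0:ℝ) < T from hT) (fun _ => c) n = if n = 0 then c else 0 := by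
  haveI : Fact (0 < T - 0) := ⟨by rw [sub_zero]; exact hT⟩
  rw [fourierCoeffOn_eq_integral]
  by_cases hn : n = 0
  · subst hn
    simp only [neg_zero, fourier_zero, one_smul, if_pos]
    rw [intervalIntegral.integral_const, smul_smul]
    rw [sub_zero, one_div, inv_mul_cancel₀ hT.ne']
    rw [one_smul]
  · rw [if_neg hn]
    set c₀ : ℂ := 2 * Real.pi * I * (-n) / (T - 0 : ℝ) with hc0
    have hc₀ : c₀ ≠ 0 := by
      rw [hc0]
      apply div_ne_zero
      · simp only [mul_ne_zero_iff]
        refine ⟨⟨⟨two_ne_zero, ?_⟩, I_ne_zero⟩, ?_⟩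
        · exact_mod_cast Real.pi_ne_zero
        · exact_mod_cast neg_ne_zero.mpr (Int.cast_ne_zero.mpr hn)
      · rw [sub_zero]; exact_mod_cast hT.ne'
    have h1 : ∀ x : ℝ, (fourier (-n) (x : AddCircle (T - 0))) • c
        = Complex.exp (c₀ * x) * c := by
      intro x
      rw [fourier_coe_apply, smul_eq_mul]
      congr 2
      rw [hc0]
      push_cast
      ring
    rw [intervalIntegral.integral_congr (g := fun x : ℝ => Complex.exp (c₀ * x) * c)
      (fun x _ => h1 x)]
    rw [intervalIntegral.integral_mul_const, integral_exp_mul_complex hc₀]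
    have hT0 : c₀ * T = (-n : ℤ) * (2 * Real.pi * I) := by
      rw [hc0, sub_zero]
      have : (T:ℂ) ≠ 0 := by exact_mod_cast hT.ne'
      field_simp
      all_goals try ring
      all_goals (push_cast; ring)
    rw [hT0, Complex.exp_int_mul_two_pi_mul_I]
    norm_num

lemma fourierCoeffOn_sub {T : ℝ} (hT : (0:ℝ) < T) {f g : ℝ → ℂ} (n : ℤ)
    (hf : IntervalIntegrable (fun x : ℝ => (fourier (-n) (x : AddCircle (T-0))) • f x)
      volume 0 T)
    (hg : IntervalIntegrable (fun x : ℝ => (fourier (-n) (x : AddCircle (T-0))) • g x)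
      volume 0 T) :
    fourierCoeffOn hT (fun x => f x - g x) n
      = fourierCoeffOn hT f n - fourierCoeffOn hT g n := by
  haveI : Fact (0 < T - 0) := ⟨by rw [sub_zero]; exact hT⟩
  rw [fourierCoeffOn_eq_integral, fourierCoeffOn_eq_integral, fourierCoeffOn_eq_integral,
    ← smul_sub, ← intervalIntegral.integral_sub hf hg]
  congr 1
  refine intervalIntegral.integral_congr fun x _ => ?_
  simp [smul_sub, mul_sub]

lemma pG_intervalIntegrable {Ω : Set ℝ} (hΩ : MeasurableSet Ω) {R : ℝ}
    (hsub : Ω ⊆ Icc (-R) R) (hR : 0 ≤ R) {p : ℕ} (hp : 0 < p) (m : ℝ) (n : ℤ) :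
    IntervalIntegrable
      (fun x : ℝ => (fourier (-n) (x : AddCircle ((p:ℝ)⁻¹ - 0))) • pG Ω m p x)
      volume 0 ((p:ℝ)⁻¹) := by
  have hT : (0:ℝ) < (p:ℝ)⁻¹ := by positivity
  haveI : Fact (0 < (p:ℝ)⁻¹ - 0) := ⟨by rw [sub_zero]; exact hT⟩
  rw [intervalIntegrable_iff_integrableOn_Ioc_of_le hT.le]
  have hmeas : Measurable fun x : ℝ =>
      (fourier (-n) (x : AddCircle ((p:ℝ)⁻¹ - 0))) • pG Ω m p x := by
    refine Measurable.smul (f := fun x : ℝ => fourier (-n) (x : AddCircle ((p:ℝ)⁻¹ - 0)))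
      (g := pG Ω m p) ?_ ?_
    · exact ((map_continuous (fourier (-n))).comp continuous_quotient_mk').measurable
    · exact pG_measurable hΩ hsub hp m
  refine memLp_one_iff_integrable.mp ?_
  refine MemLp.of_bound hmeas.aestronglyMeasurable (2 * R * p + 1)
    (Filter.Eventually.of_forall fun x => ?_)
  rw [smul_eq_mul, norm_mul, fourier_apply_norm, one_mul]
  exact pG_norm_le hsub hR hp m x

lemma const_intervalIntegrable {T : ℝ} (hT : (0:ℝ) < T) (c : ℂ) (n : ℤ) :
    IntervalIntegrable (fun x : ℝ => (fourier (-n) (x : AddCircle (T-0))) • c)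
      volume 0 T := by
  haveI : Fact (0 < T - 0) := ⟨by rw [sub_zero]; exact hT⟩
  apply Continuous.intervalIntegrable
  exact ((map_continuous (fourier (-n))).comp continuous_quotient_mk').smul continuous_const

lemma expf_mul_conj (l m y : ℝ) :
    Complex.exp (2 * Real.pi * Complex.I * (l : ℂ) * (y : ℂ))
      * (starRingEnd ℂ) (Complex.exp (2 * Real.pi * Complex.I * (m : ℂ) * (y : ℂ)))
      = eexp (l - m) y := by
  unfold eexp
  rw [← Complex.exp_conj, ← Complex.exp_add]
  congr 1
  simp only [map_mul, Complex.conj_I, Complex.conj_ofReal, map_ofNat]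
  push_cast
  ring

set_option maxHeartbeats 2000000 in
/-- If `Ω`, of measure 1, has spectrum `Λ = {λ_0 = 0, ..., λ_{p-1}} + pℤ`, then for
a.e. `x` the fiber `Ω_x = {j ∈ ℤ : x + j/p ∈ Ω}` has exactly `p` elements, and
`(1/p) ∑_{j∈Ω_x} e^{2πi(λ_{i'}-λ_i)j/p} = δ_{ii'}`, i.e. `(1/p)Ω_x` is a spectrum
for the finite set `{λ_0, ..., λ_{p-1}}`. -/
theorem fibers_of_spectral_set_have_common_finite_spectrum
    (Ω : Set ℝ) (hbd : IsBounded Ω) (hmeas : MeasurableSet Ω)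
    (hvol : volume Ω = 1)
    (p : ℕ) (hp : 0 < p)
    (lam : Fin p → ℝ) (hlam0 : lam ⟨0, hp⟩ = 0)
    (hlam_mem : ∀ i, lam i ∈ Ico (0 : ℝ) p) (hlam_inj : Function.Injective lam)
    (Λ : Set ℝ) (hΛ : Λ = {x : ℝ | ∃ i : Fin p, ∃ k : ℤ, x = lam i + k * p})
    (hspec : IsSpectrum Ω Λ) :
    (∀ᵐ x : ℝ ∂volume, ({j : ℤ | x + (j : ℝ) / p ∈ Ω}).ncard = p) ∧
    (∀ᵐ x : ℝ ∂(volume.restrict Ω), ∀ i i' : Fin p,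
      (1 / p : ℂ) * ∑' j : {j : ℤ // x + (j : ℝ) / p ∈ Ω},
        Complex.exp (2 * Real.pi * Complex.I * ((lam i' : ℂ) - lam i) * ((j : ℤ) : ℂ) / p)
      = if i = i' then 1 else 0) := by
  classical
  have hp' : (0:ℝ) < p := by exact_mod_cast hp
  have hpc : (p : ℂ) ≠ 0 := by exact_mod_cast hp'.ne'
  have hT : (0:ℝ) < (p:ℝ)⁻¹ := by positivity
  -- bounding box
  obtain ⟨r, hr⟩ := hbd.subset_closedBall 0
  set R : ℝ := max r 0 with hR_def
  have hR : 0 ≤ R := le_max_right _ _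
  have hsub : Ω ⊆ Icc (-R) R := by
    intro y hy
    have h1 := hr hy
    rw [Metric.mem_closedBall, Real.dist_eq, sub_zero] at h1
    have h2 : |y| ≤ R := le_trans h1 (le_max_left _ _)
    rw [abs_le] at h2
    exact ⟨h2.1, h2.2⟩
  -- orthogonality inputs
  have horth : ∀ (i i' : Fin p) (n : ℤ), ¬(i = i' ∧ n = 0) →
      (∫ y in Ω, eexp ((lam i' - lam i) - n * p) y) = 0 := by
    intro i i' n hcond
    have hl : lam i' ∈ Λ := by
      rw [hΛ]; exact ⟨i', 0, by push_cast; ring⟩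
    have hm : (lam i + n * p : ℝ) ∈ Λ := by
      rw [hΛ]; exact ⟨i, n, rfl⟩
    have hne : lam i' ≠ lam i + n * p := by
      intro he
      have h1 := hlam_mem i
      have h2 := hlam_mem i'
      have hn0 : n = 0 := by
        rcases lt_trichotomy n 0 with h | h | h
        · have hle : (n:ℝ) ≤ -1 := by
            have : n ≤ -1 := by omega
            exact_mod_cast this
          have : (n:ℝ) * p ≤ -p := by nlinarith
          have : lam i' < 0 := by
            rw [he]
            have := h1.2
            linarith
          linarith [h2.1]
        · exact h
        · have hle : (1:ℝ) ≤ (n:ℝ) := by exact_mod_cast h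
          have : (p:ℝ) ≤ (n:ℝ) * p := by nlinarith
          have : (p:ℝ) ≤ lam i' := by
            rw [he]
            have := h1.1
            linarith
          linarith [h2.2]
      apply hcond
      subst hn0
      refine ⟨?_, rfl⟩
      apply hlam_inj
      push_cast at he
      simpa using he.symm
    have horth0 := hspec.1 (lam i') hl (lam i + n * p) hm hne
    rw [← horth0]
    refine (setIntegral_congr_fun hmeas fun y _ => ?_).symm
    show expf (lam i') y * (starRingEnd ℂ) (expf (lam i + n * p) y) = _
    unfold expf
    rw [expf_mul_conj]
    congr 1
    push_cast
    ring
  have hint1 : (∫ y in Ω, eexp 0 y) = 1 := by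
    have he1 : ∀ y : ℝ, eexp 0 y = 1 := fun y => by
      unfold eexp; norm_num
    rw [setIntegral_congr_fun hmeas fun y _ => he1 y, setIntegral_const, measureReal_def, hvol]
    simp
  -- Case A : μ = 0, pG = p a.e.
  have hGAper : Function.Periodic (fun x => pG Ω 0 p x - (p:ℂ)) ((p:ℝ)⁻¹) := fun x => by
    simp only
    rw [pG_periodic Ω 0 hp x]
  have hGAmeas : Measurable (fun x => pG Ω 0 p x - (p:ℂ)) :=
    (pG_measurable hmeas hsub hp 0).sub_const _
  have hGAbd : ∀ x, ‖pG Ω 0 p x - (p:ℂ)‖ ≤ (2 * R * p + 1) + p := fun x => by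
    refine le_trans (norm_sub_le _ _) ?_
    have h1 := pG_norm_le hsub hR hp 0 x
    have h2 : ‖((p:ℕ):ℂ)‖ = (p:ℝ) := by simp
    linarith [h1, h2.le]
  have hGAcoeff : ∀ n : ℤ, fourierCoeffOn hT (fun x => pG Ω 0 p x - (p:ℂ)) n = 0 := by
    intro n
    rw [fourierCoeffOn_sub hT n (pG_intervalIntegrable hmeas hsub hR hp 0 n)
      (const_intervalIntegrable hT (p:ℂ) n),
      pG_fourierCoeffOn hmeas hsub hR hp 0 n hT, fourierCoeffOn_const hT (p:ℂ) n]
    by_cases hn : n = 0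
    · subst hn
      rw [if_pos rfl]
      simp only [Int.cast_zero, zero_mul, sub_zero]
      rw [hint1]
      rw [Complex.real_smul]
      push_cast
      ring
    · rw [if_neg hn]
      have h0 : (0 : ℝ) - n * p = (lam ⟨0, hp⟩ - lam ⟨0, hp⟩) - n * p := by
        rw [sub_self]
      rw [h0, horth ⟨0, hp⟩ ⟨0, hp⟩ n (fun hcon => hn hcon.2)]
      simp
  have hGA : ∀ᵐ x : ℝ ∂volume, pG Ω 0 p x = (p:ℂ) := by
    have h := ae_zero_of_fourierCoeffOn_eq_zero hT hGAper hGAmeas hGAbd hGAcoeff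
    filter_upwards [h] with x hx
    have : pG Ω 0 p x - (p:ℂ) = 0 := by simpa using hx
    exact sub_eq_zero.mp this
  -- Case B
  have hGB : ∀ i i' : Fin p, i ≠ i' → ∀ᵐ x : ℝ ∂volume, pG Ω (lam i' - lam i) p x = 0 := by
    intro i i' hne
    have hco : ∀ n : ℤ, fourierCoeffOn hT (pG Ω (lam i' - lam i) p) n = 0 := by
      intro n
      rw [pG_fourierCoeffOn hmeas hsub hR hp (lam i' - lam i) n hT,
        horth i i' n (fun hcon => hne hcon.1), smul_zero]
    have h := ae_zero_of_fourierCoeffOn_eq_zero hT (pG_periodic Ω _ hp)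
      (pG_measurable hmeas hsub hp _) (fun x => pG_norm_le hsub hR hp _ x) hco
    filter_upwards [h] with x hx
    simpa using hx
  -- fiber sums
  have hWsum : ∀ (c : ℝ) (x : ℝ),
      (∑' j : {j : ℤ // x + (j : ℝ) / p ∈ Ω},
        Complex.exp (2 * Real.pi * Complex.I * ((c : ℝ) : ℂ) * ((j : ℤ) : ℂ) / p))
      = ∑ j ∈ (fiber_finite hsub hp x).toFinset,
          Complex.exp (2 * Real.pi * Complex.I * ((c : ℝ) : ℂ) * ((j : ℤ) : ℂ) / p) := by
    intro c x
    set S : Set ℤ := {j : ℤ | x + (j : ℝ) / p ∈ Ω} with hS_def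
    set f : ℤ → ℂ := fun j => Complex.exp (2 * Real.pi * Complex.I * ((c : ℝ) : ℂ) * (j : ℂ) / p)
      with hf_def
    have h1 : (∑' j : {j : ℤ // x + (j : ℝ) / p ∈ Ω}, f (j : ℤ)) = ∑' j : ℤ, S.indicator f j :=
      tsum_subtype S f
    rw [h1, tsum_eq_sum (s := (fiber_finite hsub hp x).toFinset) (fun j hj =>
      Set.indicator_of_notMem (by simpa [hS_def, Set.Finite.mem_toFinset] using hj) f)]
    refine Finset.sum_congr rfl fun j hj => ?_
    rw [Set.Finite.mem_toFinset] at hj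
    exact Set.indicator_of_mem hj f
  have hpGW : ∀ (c : ℝ) (x : ℝ), pG Ω c p x
      = eexp c x * ∑ j ∈ (fiber_finite hsub hp x).toFinset,
          Complex.exp (2 * Real.pi * Complex.I * ((c : ℝ) : ℂ) * ((j : ℤ) : ℂ) / p) := by
    intro c x
    rw [pG_eq_sum hsub hp, Finset.mul_sum]
    refine Finset.sum_congr rfl fun j hj => ?_
    unfold eexp
    rw [← Complex.exp_add]
    congr 1
    push_cast
    field_simp
  -- the fiber cardinality, pointwise
  have hcard : ∀ x : ℝ, pG Ω 0 p x = ((fiber_finite hsub hp x).toFinset.card : ℂ) := by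
    intro x
    rw [pG_eq_sum hsub hp]
    rw [Finset.sum_congr rfl (fun j _ => by unfold eexp; norm_num :
      ∀ j ∈ (fiber_finite hsub hp x).toFinset, eexp 0 (x + (j:ℝ)/p) = 1)]
    rw [Finset.sum_const, nsmul_eq_mul, mul_one]
  -- Part 1
  have part1 : ∀ᵐ x : ℝ ∂volume, ({j : ℤ | x + (j : ℝ) / p ∈ Ω}).ncard = p := by
    filter_upwards [hGA] with x hx
    rw [hcard x] at hx
    have hcp : (fiber_finite hsub hp x).toFinset.card = p := by exact_mod_cast hx
    rw [Set.ncard_eq_toFinset_card _ (fiber_finite hsub hp x)]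
    exact hcp
  -- Part 2
  have hBall : ∀ᵐ x : ℝ ∂volume, ∀ i i' : Fin p, i ≠ i' →
      pG Ω (lam i' - lam i) p x = 0 := by
    rw [MeasureTheory.ae_all_iff]
    intro i
    rw [MeasureTheory.ae_all_iff]
    intro i'
    by_cases hii : i = i'
    · exact Filter.Eventually.of_forall fun x h => absurd hii h
    · filter_upwards [hGB i i' hii] with x hx _
      exact hx
  have part2 : ∀ᵐ x : ℝ ∂volume, ∀ i i' : Fin p,
      (1 / p : ℂ) * ∑' j : {j : ℤ // x + (j : ℝ) / p ∈ Ω},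
        Complex.exp (2 * Real.pi * Complex.I * ((lam i' : ℂ) - lam i) * ((j : ℤ) : ℂ) / p)
      = if i = i' then 1 else 0 := by
    filter_upwards [hGA, hBall] with x hxA hxB
    intro i i'
    have hrw : ((lam i' : ℂ) - lam i) = (((lam i' - lam i : ℝ)) : ℂ) := by push_cast; ring
    simp only [hrw]
    rw [hWsum (lam i' - lam i) x]
    by_cases hii : i = i'
    · subst hii
      rw [if_pos rfl]
      have hsum1 : ∑ j ∈ (fiber_finite hsub hp x).toFinset,
          Complex.exp (2 * Real.pi * Complex.I * (((lam i - lam i : ℝ)) : ℂ) * ((j : ℤ) : ℂ) / p)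
          = ((fiber_finite hsub hp x).toFinset.card : ℂ) := by
        rw [Finset.sum_congr rfl (fun j _ => by norm_num :
          ∀ j ∈ (fiber_finite hsub hp x).toFinset,
            Complex.exp (2 * Real.pi * Complex.I * (((lam i - lam i : ℝ)) : ℂ)
              * ((j : ℤ) : ℂ) / p) = 1)]
        rw [Finset.sum_const, nsmul_eq_mul, mul_one]
      rw [hsum1]
      rw [hcard x] at hxA
      rw [show (((fiber_finite hsub hp x).toFinset.card : ℕ) : ℂ) = ((p:ℕ) : ℂ) from hxA]
      rw [one_div, inv_mul_cancel₀ hpc]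
    · rw [if_neg hii]
      have hz := hxB i i' hii
      rw [hpGW (lam i' - lam i) x] at hz
      have hW := (mul_eq_zero.mp hz).resolve_left (Complex.exp_ne_zero _)
      rw [hW, mul_zero]
  exact ⟨part1, ae_restrict_of_ae part2⟩
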